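/- Let λ be a partition with g^(λ)_q = #((M^(λ)+q) ∩ (ℤ \ M^(λ))) for q ∈ ℤ. Then g^(λ)_q = g^(λ)_{−q} + q for every integer q. -/

import Mathlib

/-- A partition, as a 1-indexed weakly decreasing sequence of non-negative
integers with finitely many nonzero parts (index 0 is unused and set to 0). -/
def IsPartition (lam : ℕ → ℕ) : Prop :=
  lam 0 = 0 ∧ (∀ i, 1 ≤ i → lam (i + 1) ≤ lam i) ∧ ∃ n, ∀ i, n ≤ i → lam i = 0

/-- The Maya diagram `M^(λ) = {λ_i - i : i ≥ 1}`. -/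
def Maya (lam : ℕ → ℕ) : Set ℤ := {z | ∃ i : ℕ, 1 ≤ i ∧ z = (lam i : ℤ) - i}

/-- `g^(λ)_q = #((M^(λ) + q) ∩ (ℤ \ M^(λ)))`. -/
noncomputable def gq (lam : ℕ → ℕ) (q : ℤ) : ℕ :=
  (((fun z => z + q) '' Maya lam) ∩ (Maya lam)ᶜ).ncard

/-- Counting lemma for a window. -/
lemma count_window (M : Set ℤ) (a b c h : ℤ) (hca : c ≤ a) (hbh : b ≤ h) (hab : a ≤ b)
    (hlo : ∀ z, z < a → z ∈ M) (hhi : ∀ z ∈ M, z < b) :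
    (M ∩ Set.Ico c h).ncard = (a - c).toNat + (M ∩ Set.Ico a b).ncard := by
  have hsplit : M ∩ Set.Ico c h = Set.Ico c a ∪ (M ∩ Set.Ico a b) := by
    ext z
    simp only [Set.mem_inter_iff, Set.mem_Ico, Set.mem_union]
    constructor
    · rintro ⟨hz, hcz, hzh⟩
      rcases lt_or_ge z a with h1 | h1
      · exact Or.inl ⟨hcz, h1⟩
      · exact Or.inr ⟨hz, h1, hhi z hz⟩
    · rintro (⟨h1, h2⟩ | ⟨h1, h2, h3⟩)
      · exact ⟨hlo z h2, h1, lt_of_lt_of_le h2 (le_trans hab hbh)⟩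
      · exact ⟨h1, le_trans hca h2, lt_of_lt_of_le h3 hbh⟩
  have hdisj : Disjoint (Set.Ico c a) (M ∩ Set.Ico a b) := by
    rw [Set.disjoint_left]
    rintro z ⟨_, hz⟩ ⟨_, hz', _⟩
    omega
  rw [hsplit, Set.ncard_union_eq hdisj (Set.finite_Ico c a)
    ((Set.finite_Ico a b).subset (Set.inter_subset_right))]
  congr 1
  rw [← Finset.coe_Ico, Set.ncard_coe_finset, Int.card_Ico]

/-- The key counting identity for a co-bounded set of integers. -/
lemma key (M : Set ℤ) (a b : ℤ) (hab : a ≤ b)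
    (hlo : ∀ z, z < a → z ∈ M) (hhi : ∀ z ∈ M, z < b) (q : ℤ) :
    ((((fun z => z + q) '' M) ∩ Mᶜ).ncard : ℤ)
      = (M ∩ ((fun z => z + q) '' M)ᶜ).ncard + q := by
  set X := (fun z => z + q) '' M with hXdef
  have hX : ∀ z : ℤ, z ∈ X ↔ z - q ∈ M := by
    intro z
    constructor
    · rintro ⟨x, hx, rfl⟩; simpa using hx
    · intro hz; exact ⟨z - q, hz, by ring⟩
  set lo := a - |q| with hlodef
  set hi := b + |q| with hhidef
  have habs1 : -|q| ≤ q := neg_abs_le q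
  have habs2 : q ≤ |q| := le_abs_self q
  set I := Set.Ico lo hi with hIdef
  have hIfin : I.Finite := Set.finite_Ico lo hi
  -- A ⊆ I
  have hA : X ∩ Mᶜ ⊆ I := by
    rintro z ⟨hz1, hz2⟩
    have h1 : z - q ∈ M := (hX z).1 hz1
    have h2 : z - q < b := hhi _ h1
    have h3 : ¬ z < a := fun h => hz2 (hlo z h)
    simp only [hIdef, Set.mem_Ico]; omega
  -- B ⊆ I
  have hB : M ∩ Xᶜ ⊆ I := by
    rintro z ⟨hz1, hz2⟩
    have h1 : z < b := hhi _ hz1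
    have h2 : ¬ z - q < a := fun h => hz2 ((hX z).2 (hlo _ h))
    simp only [hIdef, Set.mem_Ico]; omega
  -- step A
  have hXIfin : (X ∩ I).Finite := hIfin.subset Set.inter_subset_right
  have hMIfin : (M ∩ I).Finite := hIfin.subset Set.inter_subset_right
  have eA : ((X ∩ I) ∩ M).ncard + (X ∩ Mᶜ).ncard = (X ∩ I).ncard := by
    have := Set.ncard_inter_add_ncard_diff_eq_ncard (X ∩ I) M hXIfin
    have hd : (X ∩ I) \ M = X ∩ Mᶜ := by
      ext z
      simp only [Set.mem_diff, Set.mem_inter_iff, Set.mem_compl_iff]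
      exact ⟨fun ⟨⟨h1, _⟩, h2⟩ => ⟨h1, h2⟩, fun h => ⟨⟨h.1, hA h⟩, h.2⟩⟩
    rwa [hd] at this
  have eB : ((M ∩ I) ∩ X).ncard + (M ∩ Xᶜ).ncard = (M ∩ I).ncard := by
    have := Set.ncard_inter_add_ncard_diff_eq_ncard (M ∩ I) X hMIfin
    have hd : (M ∩ I) \ X = M ∩ Xᶜ := by
      ext z
      simp only [Set.mem_diff, Set.mem_inter_iff, Set.mem_compl_iff]
      exact ⟨fun ⟨⟨h1, _⟩, h2⟩ => ⟨h1, h2⟩, fun h => ⟨⟨h.1, hB h⟩, h.2⟩⟩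
    rwa [hd] at this
  have hcomm : (X ∩ I) ∩ M = (M ∩ I) ∩ X := by
    ext z; simp only [Set.mem_inter_iff]; tauto
  -- step C: translation
  have eC : (X ∩ I).ncard = (M ∩ Set.Ico (lo - q) (hi - q)).ncard := by
    have himg : X ∩ I = (fun z => z + q) '' (M ∩ Set.Ico (lo - q) (hi - q)) := by
      ext z
      simp only [Set.mem_inter_iff, Set.mem_image, Set.mem_Ico, hIdef]
      constructor
      · rintro ⟨hz1, hz2, hz3⟩
        exact ⟨z - q, ⟨(hX z).1 hz1, by omega, by omega⟩, by ring⟩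
      · rintro ⟨x, ⟨hx1, hx2, hx3⟩, rfl⟩
        exact ⟨(hX _).2 (by simpa using hx1), by omega, by omega⟩
    rw [himg, Set.ncard_image_of_injective _ (add_left_injective q)]
  -- step D: counts
  have eD1 : (M ∩ Set.Ico (lo - q) (hi - q)).ncard
      = (a - (lo - q)).toNat + (M ∩ Set.Ico a b).ncard :=
    count_window M a b (lo - q) (hi - q) (by omega) (by omega) hab hlo hhi
  have eD2 : (M ∩ I).ncard = (a - lo).toNat + (M ∩ Set.Ico a b).ncard :=
    count_window M a b lo hi (by omega) (by omega) hab hlo hhi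
  rw [hcomm] at eA
  have ht1 : ((a - (lo - q)).toNat : ℤ) = a - lo + q := by omega
  have ht2 : ((a - lo).toNat : ℤ) = a - lo := by omega
  omega

/-- For every partition `λ` and every integer `q`, `g^(λ)_q = g^(λ)_{-q} + q`. -/
theorem stmt13 (lam : ℕ → ℕ) (hp : IsPartition lam) (q : ℤ) :
    (gq lam q : ℤ) = gq lam (-q) + q := by
  obtain ⟨h0, hmono, n, hn⟩ := hp
  -- antitone
  have hanti : ∀ i j : ℕ, 1 ≤ i → i ≤ j → lam j ≤ lam i := by
    intro i j hi hij
    induction j with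
    | zero => omega
    | succ k ih =>
      rcases Nat.lt_or_ge i (k + 1) with h | h
      · have hk : 1 ≤ k := by omega
        exact le_trans (hmono k hk) (ih (by omega))
      · have : i = k + 1 := by omega
        subst this; rfl
  set M := Maya lam with hM
  -- bounds
  have hhi0 : ∀ z ∈ M, z < (lam 1 : ℤ) + 1 := by
    rintro z ⟨i, hi, rfl⟩
    have := hanti 1 i (le_refl 1) hi
    omega
  have hlo0 : ∀ z : ℤ, z < -(n : ℤ) - 1 → z ∈ M := by
    intro z hz
    refine ⟨(-z).toNat, by omega, ?_⟩
    have hln : lam (-z).toNat = 0 := hn _ (by omega)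
    rw [hln]
    omega
  set a := min (-(n : ℤ) - 1) ((lam 1 : ℤ) + 1) with ha
  set b := max (-(n : ℤ) - 1) ((lam 1 : ℤ) + 1) with hb
  have hab : a ≤ b := min_le_max
  have hlo : ∀ z : ℤ, z < a → z ∈ M := fun z hz => hlo0 z (by omega)
  have hhi : ∀ z ∈ M, z < b := fun z hz => lt_of_lt_of_le (hhi0 z hz) (le_max_right _ _)
  have h1 := key M a b hab hlo hhi q
  -- relate gq lam (-q) to M ∩ ((·+q)''M)ᶜ
  have hX : ∀ z : ℤ, (z ∈ (fun z => z + q) '' M ↔ z - q ∈ M) := by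
    intro z
    constructor
    · rintro ⟨x, hx, rfl⟩; simpa using hx
    · intro hz; exact ⟨z - q, hz, by ring⟩
  have h2 : gq lam (-q) = (M ∩ ((fun z => z + q) '' M)ᶜ).ncard := by
    have himg : (fun z => z + q) '' (((fun z => z + (-q)) '' M) ∩ Mᶜ)
        = M ∩ ((fun z => z + q) '' M)ᶜ := by
      ext z
      simp only [Set.mem_image, Set.mem_inter_iff, Set.mem_compl_iff]
      constructor
      · rintro ⟨x, ⟨⟨y, hy, rfl⟩, hx2⟩, rfl⟩
        constructor
        · simpa using hy
        · intro hmem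
          exact hx2 (by simpa [sub_eq_add_neg] using (hX _).1 hmem)
      · rintro ⟨hz1, hz2⟩
        refine ⟨z - q, ⟨⟨z, hz1, by ring⟩, ?_⟩, by ring⟩
        intro hmem
        exact hz2 ((hX z).2 (by simpa using hmem))
    rw [show gq lam (-q) = (((fun z => z + (-q)) '' M) ∩ Mᶜ).ncard from rfl,
      ← Set.ncard_image_of_injective _ (add_left_injective q), himg]
  rw [show gq lam q = (((fun z => z + q) '' M) ∩ Mᶜ).ncard from rfl, h2]
  omega
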